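/- Fix k ≥ 2 and 0 ≤ a ≤ k-1. For all n ≥ 0 and 0 ≤ m ≤ n, the number of generalized k-Dyck paths of depth a, semilength n, and semiheight m equals the number of (α,β)-colored order-(k-1) Motzkin paths of length n and height m, where α_i = C(k,i+1) - C(k-a-1,i+1) and β_i = C(k,i+1) for 0 ≤ i ≤ k-2. -/

import Mathlib

open Finset PowerSeries


/-- The validity condition for a single step `(s, c)` (vertical displacement `s`, color `c`)
of an `(α,β)`-colored order-`ℓ` Motzkin path, where `h` is the height at which the step ends.
Up steps `s = 1` and maximal down steps `D_ℓ` are uncolored (color `0`); a down step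
`D_d = (1,-d)` with `d < ℓ` gets one of `α d` colors if it ends at height `0` and one of
`β d` colors if it ends at positive height. -/
def MotzkinStepOK (ℓ : ℕ) (α β : ℕ → ℕ) (s : ℤ) (c : ℕ) (h : ℤ) : Prop :=
  (s = 1 ∧ c = 0) ∨
  ∃ d : ℕ, d ≤ ℓ ∧ s = -(d : ℤ) ∧
    (if d = ℓ then c = 0 else c < (if h = 0 then α d else β d))

/-- The set of `(α,β)`-colored order-`ℓ` Motzkin paths of length `n` and height `m`,
encoded as lists of (displacement, color) pairs.  The path stays weakly above `y = 0`. -/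
def ColoredMotzkinSet (ℓ : ℕ) (α β : ℕ → ℕ) (n m : ℕ) : Set (List (ℤ × ℕ)) :=
  {L | L.length = n ∧ (L.map Prod.fst).sum = (m : ℤ) ∧
    ∀ i < n, 0 ≤ ((L.take (i + 1)).map Prod.fst).sum ∧
      MotzkinStepOK ℓ α β (L.getD i (0, 0)).1 (L.getD i (0, 0)).2
        (((L.take (i + 1)).map Prod.fst).sum)}

/-- `M ℓ α β n m` is the number of `(α,β)`-colored order-`ℓ` Motzkin paths of
length `n` and height `m`. -/
noncomputable def M (ℓ : ℕ) (α β : ℕ → ℕ) (n m : ℕ) : ℕ :=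
  Nat.card (ColoredMotzkinSet ℓ α β n m)

/-- The set of generalized `k`-Dyck paths of depth `a`, semilength `n` and semiheight `m`:
lattice paths from `(0,0)` to `(k*n, k*m)` using steps `U = (1,1)` and `D_{k-1} = (1,1-k)`
that stay weakly above the line `y = -a`, encoded as lists of vertical displacements. -/
def DyckSet (k a n m : ℕ) : Set (List ℤ) :=
  {L | L.length = k * n ∧ L.sum = (k : ℤ) * m ∧
    (∀ s ∈ L, s = 1 ∨ s = 1 - (k : ℤ)) ∧
    ∀ i, -(a : ℤ) ≤ (L.take i).sum}

/-- `D k a n m` is the number of generalized `k`-Dyck paths of depth `a`,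
semilength `n` and semiheight `m`. -/
noncomputable def D (k a n m : ℕ) : ℕ := Nat.card (DyckSet k a n m)


namespace DMAux

variable {τ : Type*} [Inhabited τ]

def SuffSet (f : τ → ℤ) (OK : τ → ℤ → Prop) (N : ℕ) (e₀ e : ℤ) : Set (List τ) :=
  {L | L.length = N ∧ e₀ + (L.map f).sum = e ∧
    ∀ i < N, OK (L.getD i default) (e₀ + ((L.take (i + 1)).map f).sum)}

lemma append_mem_suffSet_iff (f : τ → ℤ) (OK : τ → ℤ → Prop) {N₁ N₂ : ℕ} {e₀ e : ℤ}
    {L₁ L₂ : List τ} (h₁ : L₁.length = N₁) (h₂ : L₂.length = N₂) :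
    L₁ ++ L₂ ∈ SuffSet f OK (N₁ + N₂) e₀ e ↔
      L₁ ∈ SuffSet f OK N₁ e₀ (e₀ + (L₁.map f).sum) ∧
      L₂ ∈ SuffSet f OK N₂ (e₀ + (L₁.map f).sum) e := by
  have hlen : (L₁ ++ L₂).length = N₁ + N₂ := by simp [h₁, h₂]
  have htake : ∀ i < N₁, (L₁ ++ L₂).take (i + 1) = L₁.take (i + 1) := fun i hi =>
    List.take_append_of_le_length (by omega)
  have htake2 : ∀ j : ℕ, (L₁ ++ L₂).take (N₁ + j + 1) = L₁ ++ L₂.take (j + 1) := by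
    intro j
    rw [List.take_append, List.take_of_length_le (by omega)]
    congr 2
    omega
  have hget1 : ∀ i < N₁, (L₁ ++ L₂).getD i default = L₁.getD i default := fun i hi =>
    List.getD_append _ _ _ _ (by omega)
  have hget2 : ∀ j : ℕ, (L₁ ++ L₂).getD (N₁ + j) default = L₂.getD j default := by
    intro j
    rw [List.getD_append_right _ _ _ _ (by omega)]
    congr 1
    omega
  constructor
  · rintro ⟨-, hsum, hidx⟩
    rw [List.map_append, List.sum_append, ← add_assoc] at hsum
    refine ⟨⟨h₁, rfl, fun i hi => ?_⟩, ⟨h₂, hsum, fun j hj => ?_⟩⟩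
    · have := hidx i (by omega)
      rwa [hget1 i hi, htake i hi] at this
    · have := hidx (N₁ + j) (by omega)
      rwa [hget2 j, htake2 j, List.map_append, List.sum_append, ← add_assoc] at this
  · rintro ⟨⟨-, -, hidx₁⟩, ⟨-, hsum₂, hidx₂⟩⟩
    refine ⟨hlen, ?_, fun i hi => ?_⟩
    · rw [List.map_append, List.sum_append, ← add_assoc]
      exact hsum₂
    · rcases lt_or_ge i N₁ with h | h
      · rw [hget1 i h, htake i h]
        exact hidx₁ i h
      · obtain ⟨j, rfl⟩ : ∃ j, i = N₁ + j := ⟨i - N₁, by omega⟩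
        rw [hget2 j, htake2 j, List.map_append, List.sum_append, ← add_assoc]
        exact hidx₂ j (by omega)

lemma suffSet_finite_of (f : τ → ℤ) (OK : τ → ℤ → Prop) {T : Set τ} (hT : T.Finite)
    (hOK : ∀ p h, OK p h → p ∈ T) (N : ℕ) (e₀ e : ℤ) : (SuffSet f OK N e₀ e).Finite := by
  haveI := hT.to_subtype
  have hsub : SuffSet f OK N e₀ e ⊆
      Set.range (fun v : Fin N → T => List.ofFn (fun i => (v i : τ))) := by
    rintro L ⟨hlen, -, hidx⟩
    have hmem : ∀ i, ∀ h : i < L.length, L[i] ∈ T := by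
      intro i h
      have h' : i < N := hlen ▸ h
      have := hOK _ _ (hidx i h')
      rwa [List.getD_eq_getElem _ _ h] at this
    refine ⟨fun i => ⟨L[(i : ℕ)]'(by omega), hmem _ _⟩, ?_⟩
    apply List.ext_getElem (by simp [hlen])
    intro i h1 h2
    simp
  exact (Set.finite_range _).subset hsub

theorem card_suffSet_add (f : τ → ℤ) (OK : τ → ℤ → Prop) (N₁ N₂ : ℕ) (e₀ e : ℤ) (E : Finset ℤ)
    (hfin₁ : ∀ e', (SuffSet f OK N₁ e₀ e').Finite)
    (hfin₂ : ∀ e', (SuffSet f OK N₂ e' e).Finite)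
    (hbig : (SuffSet f OK (N₁ + N₂) e₀ e).Finite)
    (hE : ∀ L ∈ SuffSet f OK (N₁ + N₂) e₀ e, e₀ + ((L.take N₁).map f).sum ∈ E) :
    Nat.card (SuffSet f OK (N₁ + N₂) e₀ e) =
      ∑ e' ∈ E, Nat.card (SuffSet f OK N₁ e₀ e') * Nat.card (SuffSet f OK N₂ e' e) := by
  classical
  have key : hbig.toFinset = E.biUnion (fun e' =>
      ((hfin₁ e').toFinset ×ˢ (hfin₂ e').toFinset).image
        (fun q : List τ × List τ => q.1 ++ q.2)) := by
    ext L
    simp only [Set.Finite.mem_toFinset, Finset.mem_biUnion, Finset.mem_image,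
      Finset.mem_product]
    constructor
    · intro hL
      have hlenL : L.length = N₁ + N₂ := hL.1
      have h₁ : (L.take N₁).length = N₁ := by rw [List.length_take]; omega
      have h₂ : (L.drop N₁).length = N₂ := by rw [List.length_drop]; omega
      have hsplit := (append_mem_suffSet_iff f OK h₁ h₂).1
        (by rwa [List.take_append_drop])
      exact ⟨e₀ + ((L.take N₁).map f).sum, hE L hL, (L.take N₁, L.drop N₁),
        ⟨by simpa using hsplit.1, by simpa using hsplit.2⟩, List.take_append_drop _ _⟩
    · rintro ⟨e', he', ⟨L₁, L₂⟩, ⟨hL₁, hL₂⟩, rfl⟩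
      have hsum : e₀ + (L₁.map f).sum = e' := hL₁.2.1
      exact (append_mem_suffSet_iff f OK hL₁.1 hL₂.1).2 ⟨by rwa [hsum], by rwa [hsum]⟩
  have hdisj : ∀ x ∈ E, ∀ y ∈ E, x ≠ y → Disjoint
      (((hfin₁ x).toFinset ×ˢ (hfin₂ x).toFinset).image
        (fun q : List τ × List τ => q.1 ++ q.2))
      (((hfin₁ y).toFinset ×ˢ (hfin₂ y).toFinset).image
        (fun q : List τ × List τ => q.1 ++ q.2)) := by
    intro x hx y hy hxy
    rw [Finset.disjoint_left]
    rintro L hLx hLy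
    simp only [Finset.mem_image, Finset.mem_product, Set.Finite.mem_toFinset] at hLx hLy
    obtain ⟨⟨A₁, A₂⟩, ⟨hA₁, hA₂⟩, hA⟩ := hLx
    obtain ⟨⟨B₁, B₂⟩, ⟨hB₁, hB₂⟩, hB⟩ := hLy
    have : A₁ = B₁ := by
      have h1 := congrArg (List.take N₁) (hA.trans hB.symm)
      rwa [List.take_left' hA₁.1, List.take_left' hB₁.1] at h1
    exact hxy (by rw [← hA₁.2.1, ← hB₁.2.1, this])
  rw [Nat.card_coe_set_eq, Set.ncard_eq_toFinset_card _ hbig, key,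
    Finset.card_biUnion hdisj]
  refine Finset.sum_congr rfl fun e' _ => ?_
  rw [Finset.card_image_of_injOn, Finset.card_product]
  · rw [Nat.card_coe_set_eq, Set.ncard_eq_toFinset_card _ (hfin₁ e'),
      Nat.card_coe_set_eq, Set.ncard_eq_toFinset_card _ (hfin₂ e')]
  · rintro ⟨A₁, A₂⟩ hA ⟨B₁, B₂⟩ hB h
    simp only [Finset.mem_coe, Finset.mem_product, Set.Finite.mem_toFinset] at hA hB
    have hl : A₁.length = B₁.length := by rw [hA.1.1, hB.1.1]
    obtain ⟨h1, h2⟩ := List.append_inj h hl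
    exact Prod.ext h1 h2




def DOK (k a : ℕ) : ℤ → ℤ → Prop :=
  fun s h => (s = 1 ∨ s = 1 - (k : ℤ)) ∧ -(a : ℤ) ≤ h

def MOK (ℓ : ℕ) (α β : ℕ → ℕ) : ℤ × ℕ → ℤ → Prop :=
  fun p h => 0 ≤ h ∧ MotzkinStepOK ℓ α β p.1 p.2 h

lemma motzkin_eq (ℓ : ℕ) (α β : ℕ → ℕ) (n m : ℕ) :
    ColoredMotzkinSet ℓ α β n m = SuffSet Prod.fst (MOK ℓ α β) n 0 (m : ℤ) := by
  ext L
  have hd : (default : ℤ × ℕ) = (0, 0) := rfl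
  constructor
  · rintro ⟨h1, h2, h3⟩
    exact ⟨h1, by simpa using h2, fun i hi => by
      simpa [MOK, hd, zero_add] using h3 i hi⟩
  · rintro ⟨h1, h2, h3⟩
    exact ⟨h1, by simpa using h2, fun i hi => by
      simpa [MOK, hd, zero_add] using h3 i hi⟩

lemma dyck_eq (k a n m : ℕ) (hk : 1 ≤ k) (hak : a < k) :
    DyckSet k a n m = SuffSet id (DOK k a) (k * n) 0 ((k : ℤ) * m) := by
  ext L
  constructor
  · rintro ⟨h1, h2, h3, h4⟩
    refine ⟨h1, by simpa using h2, fun i hi => ?_⟩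
    have hmem : L.getD i default ∈ L := by
      rw [List.getD_eq_getElem _ _ (by omega)]
      exact List.getElem_mem _
    exact ⟨h3 _ hmem, by simpa using h4 (i + 1)⟩
  · rintro ⟨h1, h2, h3⟩
    rw [List.map_id, zero_add] at h2
    refine ⟨h1, h2, fun s hs => ?_, fun i => ?_⟩
    · obtain ⟨j, hj, rfl⟩ := List.mem_iff_getElem.1 hs
      have := (h3 j (by omega)).1
      rwa [List.getD_eq_getElem _ _ hj] at this
    · rcases Nat.eq_zero_or_pos i with rfl | hi
      · simp
      · rcases lt_or_ge (i - 1) (k * n) with h | h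
        · have := (h3 (i - 1) h).2
          rw [List.map_id, zero_add] at this
          have hi1 : i - 1 + 1 = i := by omega
          rwa [hi1] at this
        · rw [List.take_of_length_le (by omega), h2]
          have : (0 : ℤ) ≤ (k : ℤ) * m := by positivity
          omega

/-- entries in `{1, 1-k}` force the sum to be `length - k*d`. -/
lemma exists_sum_eq (k : ℕ) : ∀ B : List ℤ, (∀ s ∈ B, s = 1 ∨ s = 1 - (k : ℤ)) →
    ∃ d : ℕ, d ≤ B.length ∧ B.sum = (B.length : ℤ) - k * d := by
  intro B
  induction B with
  | nil => exact fun _ => ⟨0, by simp⟩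
  | cons s B ih =>
    intro h
    obtain ⟨d, hd, hsum⟩ := ih (fun x hx => h x (List.mem_cons_of_mem _ hx))
    rcases h s (List.mem_cons_self) with rfl | rfl
    · exact ⟨d, by simp; omega, by rw [List.sum_cons, hsum]; push_cast [List.length_cons]; ring⟩
    · refine ⟨d + 1, by simp; omega, by rw [List.sum_cons, hsum]; push_cast [List.length_cons]; ring⟩

lemma dyck_finite (k a : ℕ) (N : ℕ) (e₀ e : ℤ) :
    (SuffSet id (DOK k a) N e₀ e).Finite := by
  refine suffSet_finite_of id (DOK k a) (T := {1, 1 - (k : ℤ)}) ?_ ?_ N e₀ e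
  · exact (Set.finite_singleton _).insert _
  · rintro p h ⟨hp, -⟩
    simpa using hp

lemma motzkin_finite (ℓ : ℕ) (α β : ℕ → ℕ) (N : ℕ) (e₀ e : ℤ) :
    (SuffSet Prod.fst (MOK ℓ α β) N e₀ e).Finite := by
  set BB : ℕ := 1 + ∑ d ∈ Finset.range ℓ, (α d + β d) with hBB
  refine suffSet_finite_of _ (MOK ℓ α β)
    (T := (Set.Icc (-(ℓ : ℤ)) 1) ×ˢ (Set.Iio BB)) ((Set.finite_Icc _ _).prod (Set.finite_Iio _))
    ?_ N e₀ e
  rintro ⟨s, c⟩ h ⟨-, hstep⟩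
  have hcBB : c < BB := by
    rcases hstep with ⟨-, rfl⟩ | ⟨d, hd, -, hc⟩
    · simp [hBB]
    · split at hc
      · simp only at hc; omega
      · rename_i hne
        have hdl : d < ℓ := lt_of_le_of_ne hd hne
        have hle : α d + β d ≤ ∑ d' ∈ Finset.range ℓ, (α d' + β d') :=
          Finset.single_le_sum (f := fun d' => α d' + β d') (fun _ _ => Nat.zero_le _)
            (Finset.mem_range.2 hdl)
        have : c < α d + β d := by simp only at hc; split at hc <;> omega
        omega
  have hs : -(ℓ : ℤ) ≤ s ∧ s ≤ 1 := by
    rcases hstep with ⟨hs1, -⟩ | ⟨d, hd, hs1, -⟩ <;> simp only at hs1 <;> subst hs1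
    · constructor <;> push_cast <;> omega
    · constructor <;> push_cast <;> omega
  exact ⟨Set.mem_Icc.2 hs, Set.mem_Iio.2 hcBB⟩

/-- The common step/block count. -/
def cFun (k a : ℕ) (m' m : ℕ) : ℕ :=
  if m ≤ m' + 1 ∧ m' + 1 ≤ m + k then
    (if m = 0 then Nat.choose k (m' + 1 - m) - Nat.choose (k - a - 1) (m' + 1 - m)
     else Nat.choose k (m' + 1 - m))
  else 0

lemma card_step (k a : ℕ) (hk : 2 ≤ k) (ha : a ≤ k - 1) (m' m : ℕ) :
    Nat.card (SuffSet Prod.fst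
      (MOK (k - 1) (fun i => Nat.choose k (i + 1) - Nat.choose (k - a - 1) (i + 1))
        (fun i => Nat.choose k (i + 1))) 1 (m' : ℤ) (m : ℤ)) = cFun k a m' m := by
  classical
  set αf : ℕ → ℕ := fun i => Nat.choose k (i + 1) - Nat.choose (k - a - 1) (i + 1) with hαf
  set βf : ℕ → ℕ := fun i => Nat.choose k (i + 1) with hβf
  set s : ℤ := (m : ℤ) - (m' : ℤ) with hs
  have hset : SuffSet Prod.fst (MOK (k - 1) αf βf) 1 (m' : ℤ) (m : ℤ)
      = (fun c : ℕ => [(s, c)]) '' {c : ℕ | MotzkinStepOK (k - 1) αf βf s c (m : ℤ)} := by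
    have hkey : ∀ p : ℤ × ℕ, (List.map Prod.fst (List.take (0 + 1) [p])).sum = p.1 := by
      intro p; simp
    ext L
    constructor
    · rintro ⟨h1, h2, h3⟩
      obtain ⟨p, rfl⟩ := List.length_eq_one_iff.1 h1
      simp only [List.map_cons, List.map_nil, List.sum_cons, List.sum_nil, add_zero] at h2
      have h0 := (h3 0 (by omega)).2
      rw [hkey, h2] at h0
      have hp1 : p.1 = s := by omega
      refine ⟨p.2, ?_, ?_⟩
      · rw [Set.mem_setOf_eq, ← hp1]; exact h0
      · rw [← hp1]
    · rintro ⟨c, hc, rfl⟩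
      have hms : (m' : ℤ) + s = (m : ℤ) := by rw [hs]; ring
      refine ⟨rfl, by simpa using hms, fun i hi => ?_⟩
      interval_cases i
      rw [MOK, hkey, hms]
      exact ⟨by positivity, hc⟩
  rw [Nat.card_coe_set_eq, hset, Set.ncard_image_of_injective _
    (fun c₁ c₂ h => by simpa using h)]
  by_cases hA : m = m' + 1
  · have hsetA : {c : ℕ | MotzkinStepOK (k - 1) αf βf s c (m : ℤ)} = {0} := by
      ext c
      simp only [Set.mem_setOf_eq, Set.mem_singleton_iff, MotzkinStepOK]
      constructor
      · rintro (⟨-, rfl⟩ | ⟨d, hd, heq, -⟩)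
        · rfl
        · exfalso; omega
      · rintro rfl
        exact Or.inl ⟨by omega, rfl⟩
    rw [hsetA, Set.ncard_singleton, cFun, if_pos (by omega), if_neg (by omega)]
    have : m' + 1 - m = 0 := by omega
    rw [this, Nat.choose_zero_right]
  · by_cases hC : m' = m + (k - 1)
    · have hsetC : {c : ℕ | MotzkinStepOK (k - 1) αf βf s c (m : ℤ)} = {0} := by
        ext c
        simp only [Set.mem_setOf_eq, Set.mem_singleton_iff, MotzkinStepOK]
        constructor
        · rintro (⟨heq, rfl⟩ | ⟨d, hd, heq, hcond⟩)
          · rfl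
          · have hd' : d = k - 1 := by omega
            rwa [if_pos hd'] at hcond
        · rintro rfl
          exact Or.inr ⟨k - 1, le_refl _, by omega, by rw [if_pos rfl]⟩
      rw [hsetC, Set.ncard_singleton, cFun, if_pos (by omega)]
      have hj : m' + 1 - m = k := by omega
      rw [hj, Nat.choose_self]
      split
      · rw [Nat.choose_eq_zero_of_lt (by omega)]
      · rfl
    · by_cases hB : m ≤ m' ∧ m' ≤ m + (k - 2)
      · set d₀ : ℕ := m' - m with hd₀
        set t : ℕ := if m = 0 then αf d₀ else βf d₀ with ht
        have hsetB : {c : ℕ | MotzkinStepOK (k - 1) αf βf s c (m : ℤ)}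
            = ↑(Finset.range t) := by
          have hcast : ((m : ℤ) = 0) ↔ (m = 0) := Nat.cast_eq_zero
          ext c
          simp only [Set.mem_setOf_eq, Finset.coe_range, Set.mem_Iio, MotzkinStepOK]
          constructor
          · rintro (⟨heq, rfl⟩ | ⟨d, hd, heq, hcond⟩)
            · exfalso; omega
            · have hd' : d = d₀ := by omega
              subst hd'
              rw [if_neg (by omega), if_congr hcast rfl rfl] at hcond
              rw [ht]
              exact hcond
          · intro hc
            rw [ht] at hc
            exact Or.inr ⟨d₀, by omega, by omega, by
              rw [if_neg (by omega), if_congr hcast rfl rfl]; exact hc⟩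
        rw [hsetB, Set.ncard_coe_finset, Finset.card_range, cFun, if_pos (by omega)]
        have hj : m' + 1 - m = d₀ + 1 := by omega
        rw [hj, ht, hαf, hβf]
      · have hsetD : {c : ℕ | MotzkinStepOK (k - 1) αf βf s c (m : ℤ)} = ∅ := by
          ext c
          simp only [Set.mem_setOf_eq, Set.mem_empty_iff_false, iff_false, MotzkinStepOK]
          rintro (⟨heq, -⟩ | ⟨d, hd, heq, -⟩) <;> omega
        rw [hsetD, Set.ncard_empty, cFun, if_neg (by omega)]

def blockFn (k : ℕ) (S : Finset (Fin k)) : Fin k → ℤ := fun i => if i ∈ S then 1 - (k : ℤ) else 1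

lemma card_filter_lt (k t : ℕ) (ht : t ≤ k) :
    (Finset.univ.filter fun j : Fin k => j.val < t).card = t := by
  classical
  have : (Finset.univ.filter fun j : Fin k => j.val < t)
      = Finset.attachFin (Finset.range t) (fun x hx => lt_of_lt_of_le (Finset.mem_range.1 hx) ht) := by
    ext j
    simp [Finset.mem_attachFin]
  rw [this, Finset.card_attachFin, Finset.card_range]

lemma sum_blockFn (k : ℕ) (S : Finset (Fin k)) (t : ℕ) (ht : t ≤ k) :
    ((List.ofFn (blockFn k S)).take t).sum
      = (t : ℤ) - k * ((S.filter fun x : Fin k => x.val < t).card : ℤ) := by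
  classical
  rw [List.sum_take_ofFn]
  simp only [blockFn]
  rw [Finset.sum_ite (f := fun _ => (1 - (k : ℤ))) (g := fun _ => (1 : ℤ)),
    Finset.sum_const, Finset.sum_const]
  have h1 : (Finset.univ.filter fun j : Fin k => j.val < t).filter (fun j => j ∈ S)
      = S.filter (fun x : Fin k => x.val < t) := by
    ext j
    simp only [Finset.mem_filter, Finset.mem_univ, true_and]
    tauto
  have h2 := Finset.card_filter_add_card_filter_not
    (s := Finset.univ.filter fun j : Fin k => j.val < t) (p := fun j => j ∈ S)
  rw [card_filter_lt k t ht, h1] at h2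
  rw [h1]
  set Dn := (S.filter fun x : Fin k => x.val < t).card with hDn
  rw [show ((Finset.univ.filter fun j : Fin k => j.val < t).filter (fun j => ¬ j ∈ S)).card
    = t - Dn from by omega]
  simp only [nsmul_eq_mul, mul_one]
  have hDt : Dn ≤ t := by omega
  push_cast [Nat.cast_sub hDt]
  ring

lemma card_block (k a : ℕ) (hk : 2 ≤ k) (ha : a ≤ k - 1) (m' m : ℕ) :
    Nat.card (SuffSet id (DOK k a) k ((k : ℤ) * m') ((k : ℤ) * m)) = cFun k a m' m := by
  classical
  set j : ℕ := m' + 1 - m with hj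
  set Q : Finset (Fin k) → Prop := fun S =>
    ((S.card : ℤ) = (m' : ℤ) + 1 - (m : ℤ)) ∧
    ∀ i < k, -(a : ℤ) ≤ (k : ℤ) * m' + ((i : ℤ) + 1)
      - (k : ℤ) * ((S.filter fun x : Fin k => x.val < i + 1).card : ℤ) with hQ
  have hknz : (k : ℤ) ≠ 0 := by positivity
  -- membership characterization
  have mem_iff : ∀ S : Finset (Fin k),
      List.ofFn (blockFn k S) ∈ SuffSet id (DOK k a) k ((k : ℤ) * m') ((k : ℤ) * m) ↔ Q S := by
    intro S
    have hfull : (List.ofFn (blockFn k S)).sum = (k : ℤ) - k * (S.card : ℤ) := by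
      rw [← List.take_of_length_le (le_of_eq List.length_ofFn), sum_blockFn k S k le_rfl,
        Finset.filter_true_of_mem (fun x _ => x.isLt)]
    constructor
    · rintro ⟨h1, h2, h3⟩
      rw [List.map_id, hfull] at h2
      constructor
      · have hcancel : (k : ℤ) * ((m' : ℤ) + 1 - (S.card : ℤ)) = (k : ℤ) * m := by
          linear_combination h2
        have := mul_left_cancel₀ hknz hcancel
        linarith
      · intro i hi
        have h4 := (h3 i hi).2
        rw [List.map_id, sum_blockFn k S (i + 1) (by omega)] at h4
        push_cast at h4 ⊢
        linarith
    · rintro ⟨hQ1, hQ2⟩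
      refine ⟨by simp, ?_, fun i hi => ?_⟩
      · rw [List.map_id, hfull, hQ1]
        ring
      · have hik : i < k := hi
        constructor
        · rw [List.getD_eq_getElem _ _ (by simpa using hik)]
          simp only [List.getElem_ofFn, blockFn]
          split
          · exact Or.inr rfl
          · exact Or.inl rfl
        · rw [List.map_id, sum_blockFn k S (i + 1) (by omega)]
          have h5 := hQ2 i hik
          push_cast at h5 ⊢
          linarith
  -- the set is the image of the valid Finsets
  have hset : SuffSet id (DOK k a) k ((k : ℤ) * m') ((k : ℤ) * m)
      = (fun S : Finset (Fin k) => List.ofFn (blockFn k S)) '' {S | Q S} := by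
    ext L
    constructor
    · intro hL
      obtain ⟨h1, h2, h3⟩ := id hL
      set S : Finset (Fin k) := Finset.univ.filter
        (fun i : Fin k => L.getD i.val default = 1 - (k : ℤ)) with hS
      have hLS : L = List.ofFn (blockFn k S) := by
        apply List.ext_getElem (by simp [h1])
        intro i h1' h2'
        have hik : i < k := by omega
        have hent := (h3 i (by omega)).1
        rw [List.getD_eq_getElem _ _ h1'] at hent
        simp only [List.getElem_ofFn, blockFn]
        have hmemS : (⟨i, hik⟩ : Fin k) ∈ S ↔ L[i] = 1 - (k : ℤ) := by
          rw [hS]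
          simp only [Finset.mem_filter, Finset.mem_univ, true_and]
          rw [List.getD_eq_getElem _ _ h1']
        rcases hent with he | he
        · rw [if_neg (by rw [hmemS, he]; intro hcon; omega)]
          exact he
        · rw [if_pos (hmemS.2 he)]
          exact he
      exact ⟨S, (mem_iff S).1 (hLS ▸ ⟨h1, h2, h3⟩), hLS.symm⟩
    · rintro ⟨S, hQS, rfl⟩
      exact (mem_iff S).2 hQS
  have hinj : Function.Injective (fun S : Finset (Fin k) => List.ofFn (blockFn k S)) := by
    intro S S' h
    ext i
    have := congrFun (List.ofFn_injective h) i
    simp only [blockFn] at this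
    by_cases hi : i ∈ S <;> by_cases hi' : i ∈ S' <;>
      simp only [hi, hi', if_pos, if_neg, not_false_iff] at this ⊢ <;> first | trivial | omega
  rw [Nat.card_coe_set_eq, hset, Set.ncard_image_of_injective _ hinj]
  have hsetQ : {S : Finset (Fin k) | Q S} = ↑(Finset.univ.filter Q) := by
    ext S; simp
  rw [hsetQ, Set.ncard_coe_finset]
  -- now count the valid Finsets
  by_cases hrange : m ≤ m' + 1 ∧ m' + 1 ≤ m + k
  · have hcard_iff : ∀ S : Finset (Fin k), ((S.card : ℤ) = (m' : ℤ) + 1 - (m : ℤ)) ↔ S.card = j := by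
      intro S
      constructor <;> intro h <;> omega
    by_cases hm0 : m = 0
    · -- m = 0 : subtract the bad sets
      subst hm0
      set low : Finset (Fin k) := Finset.univ.filter (fun x : Fin k => x.val < k - a - 1) with hlow
      have hQiff : ∀ S : Finset (Fin k), Q S ↔ (S.card = j ∧ ¬ S ⊆ low) := by
        intro S
        rw [hQ]
        simp only
        constructor
        · rintro ⟨h1, h2⟩
          have hcard : S.card = j := (hcard_iff S).1 h1
          refine ⟨hcard, fun hsub => ?_⟩
          have hjpos : 1 ≤ j := by omega
          obtain ⟨x, hx⟩ := Finset.card_pos.1 (by omega : 0 < S.card)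
          have hxlow : x.val < k - a - 1 := by
            have := hsub hx
            rw [hlow] at this
            simpa using this
          have hkA : 1 ≤ k - a - 1 := by omega
          have hfilt : S.filter (fun y : Fin k => y.val < (k - a - 2) + 1) = S := by
            apply Finset.filter_true_of_mem
            intro y hy
            have := hsub hy
            rw [hlow] at this
            simp only [Finset.mem_filter, Finset.mem_univ, true_and] at this
            omega
          have hcon := h2 (k - a - 2) (by omega)
          rw [hfilt, hcard] at hcon
          have hjm : j = m' + 1 := by omega
          have hcast : ((k - a - 2 : ℕ) : ℤ) = (k : ℤ) - a - 2 := by omega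
          have hkk : (k : ℤ) * ((j : ℕ) : ℤ) = (k : ℤ) * m' + k := by
            rw [hjm]; push_cast; ring
          rw [hcast, hkk] at hcon
          have hak : (a : ℤ) + 1 ≤ (k : ℤ) - 1 + 1 := by
            have : a ≤ k - 1 := ha
            omega
          linarith
        · rintro ⟨hcard, hnsub⟩
          refine ⟨(hcard_iff S).2 hcard, fun i hi => ?_⟩
          rw [Finset.not_subset] at hnsub
          obtain ⟨x, hxS, hxlow⟩ := hnsub
          have hxval : k - a - 1 ≤ x.val := by
            rw [hlow] at hxlow
            simp only [Finset.mem_filter, Finset.mem_univ, true_and, not_lt] at hxlow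
            exact hxlow
          set Dn := (S.filter fun y : Fin k => y.val < i + 1).card with hDn
          have hDle : Dn ≤ S.card := Finset.card_le_card (Finset.filter_subset _ _)
          by_cases hDfull : Dn = S.card
          · have hfeq : S.filter (fun y : Fin k => y.val < i + 1) = S :=
              Finset.eq_of_subset_of_card_le (Finset.filter_subset _ _) (by omega)
            have hxin : x ∈ S.filter (fun y : Fin k => y.val < i + 1) := hfeq.symm ▸ hxS
            have hxi : x.val < i + 1 := (Finset.mem_filter.1 hxin).2
            have hika : (k : ℤ) - a ≤ (i : ℤ) + 1 := by omega
            have hkk : (k : ℤ) * ((Dn : ℕ) : ℤ) = (k : ℤ) * m' + k := by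
              rw [hDfull, hcard, hj]
              push_cast [Nat.sub_zero]
              ring
            rw [hkk]
            linarith
          · have hDlt : Dn ≤ m' := by omega
            have hmul : (k : ℤ) * ((Dn : ℕ) : ℤ) ≤ (k : ℤ) * m' :=
              mul_le_mul_of_nonneg_left (by exact_mod_cast hDlt) (by positivity)
            have : (0 : ℤ) ≤ (a : ℤ) := by positivity
            linarith
      have hfeq : Finset.univ.filter Q
          = (Finset.powersetCard j (Finset.univ : Finset (Fin k))) \ (Finset.powersetCard j low) := by
        ext S
        rw [Finset.mem_filter, Finset.mem_sdiff, Finset.mem_powersetCard_univ,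
          Finset.mem_powersetCard, hQiff S]
        constructor
        · rintro ⟨-, h1, h2⟩
          exact ⟨h1, fun hc => h2 hc.1⟩
        · rintro ⟨h1, h2⟩
          exact ⟨Finset.mem_univ S, h1, fun hsub => h2 ⟨hsub, h1⟩⟩
      rw [hfeq, Finset.card_sdiff_of_subset (fun S hS => by
        simp only [Finset.mem_powersetCard] at hS
        simp only [Finset.mem_powersetCard_univ]
        exact hS.2)]
      rw [Finset.card_powersetCard, Finset.card_powersetCard, Finset.card_univ,
        Fintype.card_fin]
      have hlowcard : low.card = k - a - 1 := card_filter_lt k (k - a - 1) (by omega)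
      rw [hlowcard, cFun, if_pos hrange, if_pos rfl]
    · -- m ≥ 1 : all sets with the right cardinality work
      have hQiff : ∀ S : Finset (Fin k), Q S ↔ S.card = j := by
        intro S
        rw [hQ]
        simp only
        constructor
        · rintro ⟨h1, -⟩
          exact (hcard_iff S).1 h1
        · intro hcard
          refine ⟨(hcard_iff S).2 hcard, fun i hi => ?_⟩
          set Dn := (S.filter fun y : Fin k => y.val < i + 1).card with hDn
          have hDle : Dn ≤ S.card := Finset.card_le_card (Finset.filter_subset _ _)
          have hDm : Dn ≤ m' := by omega
          have hmul : (k : ℤ) * ((Dn : ℕ) : ℤ) ≤ (k : ℤ) * m' :=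
            mul_le_mul_of_nonneg_left (by exact_mod_cast hDm) (by positivity)
          have : (0 : ℤ) ≤ (a : ℤ) := by positivity
          linarith
      have hfeq : Finset.univ.filter Q = Finset.powersetCard j (Finset.univ : Finset (Fin k)) := by
        ext S
        simp only [Finset.mem_filter, Finset.mem_univ, true_and, Finset.mem_powersetCard_univ]
        exact hQiff S
      rw [hfeq, Finset.card_powersetCard, Finset.card_univ, Fintype.card_fin,
        cFun, if_pos hrange, if_neg hm0]
  · have hfeq : Finset.univ.filter Q = ∅ := by
      apply Finset.eq_empty_iff_forall_notMem.2
      intro S hS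
      rw [Finset.mem_filter, hQ] at hS
      have h1 := hS.2.1
      have hcard : S.card ≤ k := by
        have := Finset.card_le_univ S
        simpa [Finset.card_univ] using this
      omega
    rw [hfeq, Finset.card_empty, cFun, if_neg hrange]

lemma M_rec (k a : ℕ) (hk : 2 ≤ k) (ha : a ≤ k - 1) (n m : ℕ) :
    M (k - 1) (fun i => Nat.choose k (i + 1) - Nat.choose (k - a - 1) (i + 1))
        (fun i => Nat.choose k (i + 1)) (n + 1) m
      = ∑ m' ∈ Finset.range (m + k),
          M (k - 1) (fun i => Nat.choose k (i + 1) - Nat.choose (k - a - 1) (i + 1))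
            (fun i => Nat.choose k (i + 1)) n m' * cFun k a m' m := by
  classical
  set αf : ℕ → ℕ := fun i => Nat.choose k (i + 1) - Nat.choose (k - a - 1) (i + 1) with hαf
  set βf : ℕ → ℕ := fun i => Nat.choose k (i + 1) with hβf
  set OK := MOK (k - 1) αf βf with hOK
  have hE : ∀ L ∈ SuffSet Prod.fst OK (n + 1) 0 (m : ℤ),
      (0 : ℤ) + ((L.take n).map Prod.fst).sum
        ∈ (Finset.range (m + k)).image (fun m' : ℕ => (m' : ℤ)) := by
    rintro L ⟨h1, h2, h3⟩
    have hn : n < L.length := by omega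
    have hTL : L.take (n + 1) = L := List.take_of_length_le (by omega)
    have hstep := h3 n (by omega)
    rw [hTL] at hstep
    set s : ℤ := (L.getD n default).1 with hs
    have hdecomp : (L.map Prod.fst).sum = ((L.take n).map Prod.fst).sum + s := by
      conv_lhs => rw [← List.take_append_drop n L]
      rw [List.map_append, List.sum_append]
      congr 1
      rw [List.drop_eq_getElem_cons hn, List.drop_eq_nil_of_le (by omega), hs,
        List.getD_eq_getElem _ _ hn]
      simp
    set e' : ℤ := ((L.take n).map Prod.fst).sum with he'
    have hnn : 0 ≤ e' := by
      rcases Nat.eq_zero_or_pos n with rfl | hnpos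
      · simp [he']
      · have h4 := (h3 (n - 1) (by omega)).1
        rw [show n - 1 + 1 = n from by omega] at h4
        rw [he']
        linarith
    have hsb : -((k : ℤ) - 1) ≤ s := by
      rcases hstep.2 with ⟨h, -⟩ | ⟨d, hd, h, -⟩
      · rw [hs, h]; omega
      · rw [hs, h]; omega
    rw [zero_add] at h2
    rw [hdecomp] at h2
    refine Finset.mem_image.2 ⟨e'.toNat, Finset.mem_range.2 (by omega), ?_⟩
    rw [zero_add]
    exact Int.toNat_of_nonneg hnn
  rw [M, motzkin_eq, ← hOK,
    card_suffSet_add Prod.fst OK n 1 0 (m : ℤ) _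
      (fun e'' => by rw [hOK]; exact motzkin_finite _ _ _ _ _ _)
      (fun e'' => by rw [hOK]; exact motzkin_finite _ _ _ _ _ _)
      (by rw [hOK]; exact motzkin_finite _ _ _ _ _ _) hE,
    Finset.sum_image (fun x _ y _ h => Nat.cast_injective h)]
  refine Finset.sum_congr rfl fun m' _ => ?_
  rw [M, motzkin_eq, ← hOK, hOK, card_step k a hk ha m' m]

lemma D_rec (k a : ℕ) (hk : 2 ≤ k) (ha : a ≤ k - 1) (n m : ℕ) :
    D k a (n + 1) m = ∑ m' ∈ Finset.range (m + k), D k a n m' * cFun k a m' m := by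
  classical
  have hE : ∀ L ∈ SuffSet id (DOK k a) (k * n + k) 0 ((k : ℤ) * m),
      (0 : ℤ) + ((L.take (k * n)).map id).sum
        ∈ (Finset.range (m + k)).image (fun m' : ℕ => ((k : ℤ) * m')) := by
    rintro L ⟨h1, h2, h3⟩
    have hent : ∀ x ∈ L, x = 1 ∨ x = 1 - (k : ℤ) := by
      intro x hx
      obtain ⟨i, hi, rfl⟩ := List.mem_iff_getElem.1 hx
      have := (h3 i (by omega)).1
      rwa [List.getD_eq_getElem _ _ hi] at this
    have hlen2 : (L.drop (k * n)).length = k := by rw [List.length_drop]; omega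
    obtain ⟨d', hd'len, hd'sum⟩ := exists_sum_eq k (L.drop (k * n))
      (fun x hx => hent x (List.mem_of_mem_drop hx))
    rw [hlen2] at hd'len hd'sum
    have hsplitsum : (L.take (k * n)).sum + (L.drop (k * n)).sum = L.sum := by
      conv_rhs => rw [← List.take_append_drop (k * n) L]
      rw [List.sum_append]
    rw [List.map_id, zero_add] at h2
    have hsum1 : (L.take (k * n)).sum = (k : ℤ) * m - k + k * d' := by
      rw [hd'sum] at hsplitsum
      linarith
    have hL1 : -(a : ℤ) ≤ (L.take (k * n)).sum := by
      rcases Nat.eq_zero_or_pos (k * n) with hz | hpos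
      · rw [hz]; simp
      · have := (h3 (k * n - 1) (by omega)).2
        rw [List.map_id, zero_add, show k * n - 1 + 1 = k * n from by omega] at this
        exact this
    have hak : (a : ℤ) ≤ (k : ℤ) - 1 := by omega
    have hmd : 1 ≤ m + d' := by
      by_contra hcon
      have hm0 : m = 0 := by omega
      have hd0 : d' = 0 := by omega
      rw [hm0, hd0] at hsum1
      simp at hsum1
      rw [hsum1] at hL1
      linarith
    set m'' : ℕ := m + d' - 1 with hm''
    refine Finset.mem_image.2 ⟨m'', Finset.mem_range.2 (by omega), ?_⟩
    rw [List.map_id, zero_add, hsum1]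
    have : ((m'' : ℕ) : ℤ) = (m : ℤ) + d' - 1 := by omega
    rw [this]
    ring
  have hsplit : k * (n + 1) = k * n + k := by ring
  rw [D, dyck_eq k a (n + 1) m (by omega) (by omega), hsplit,
    card_suffSet_add id (DOK k a) (k * n) k 0 ((k : ℤ) * m) _
      (fun e'' => dyck_finite _ _ _ _ _)
      (fun e'' => dyck_finite _ _ _ _ _)
      (dyck_finite _ _ _ _ _) hE,
    Finset.sum_image (fun x _ y _ h => by
      have hknz : (k : ℤ) ≠ 0 := by positivity
      exact Nat.cast_injective (mul_left_cancel₀ hknz h))]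
  refine Finset.sum_congr rfl fun m' _ => ?_
  rw [D, dyck_eq k a n m' (by omega) (by omega), card_block k a hk ha m' m]

lemma D_base (k a m : ℕ) (hk : 1 ≤ k) : D k a 0 m = if m = 0 then 1 else 0 := by
  rcases Nat.eq_zero_or_pos m with rfl | hm
  · rw [if_pos rfl, D]
    have : DyckSet k a 0 0 = {([] : List ℤ)} := by
      ext L
      constructor
      · rintro ⟨h1, -, -, -⟩
        rw [Set.mem_singleton_iff]
        rw [Nat.mul_zero] at h1
        exact List.length_eq_zero_iff.1 h1
      · rintro rfl
        exact ⟨by simp, by simp, by simp, fun i => by simp⟩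
    rw [this, Nat.card_coe_set_eq, Set.ncard_singleton]
  · rw [if_neg (by omega), D]
    have : DyckSet k a 0 m = ∅ := by
      ext L
      simp only [Set.mem_empty_iff_false, iff_false]
      rintro ⟨h1, h2, -, -⟩
      rw [Nat.mul_zero] at h1
      rw [List.length_eq_zero_iff.1 h1] at h2
      simp only [List.sum_nil] at h2
      have : (k : ℤ) * m ≠ 0 := by positivity
      exact this h2.symm
    rw [this, Nat.card_coe_set_eq, Set.ncard_empty]

lemma M_base (ℓ : ℕ) (α β : ℕ → ℕ) (m : ℕ) : M ℓ α β 0 m = if m = 0 then 1 else 0 := by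
  rcases Nat.eq_zero_or_pos m with rfl | hm
  · rw [if_pos rfl, M]
    have : ColoredMotzkinSet ℓ α β 0 0 = {([] : List (ℤ × ℕ))} := by
      ext L
      constructor
      · rintro ⟨h1, -, -⟩
        exact List.length_eq_zero_iff.1 h1
      · rintro rfl
        exact ⟨by simp, by simp, fun i hi => by omega⟩
    rw [this, Nat.card_coe_set_eq, Set.ncard_singleton]
  · rw [if_neg (by omega), M]
    have : ColoredMotzkinSet ℓ α β 0 m = ∅ := by
      ext L
      simp only [Set.mem_empty_iff_false, iff_false]
      rintro ⟨h1, h2, -⟩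
      rw [List.length_eq_zero_iff.1 h1] at h2
      simp only [List.map_nil, List.sum_nil] at h2
      omega
    rw [this, Nat.card_coe_set_eq, Set.ncard_empty]

lemma main_eq (k a : ℕ) (hk : 2 ≤ k) (ha : a ≤ k - 1) :
    ∀ n m : ℕ, D k a n m
      = M (k - 1) (fun i => Nat.choose k (i + 1) - Nat.choose (k - a - 1) (i + 1))
          (fun i => Nat.choose k (i + 1)) n m := by
  intro n
  induction n with
  | zero =>
    intro m
    rw [D_base k a m (by omega), M_base]
  | succ n ih =>
    intro m
    rw [D_rec k a hk ha n m, M_rec k a hk ha n m]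
    exact Finset.sum_congr rfl fun m' _ => by rw [ih m']

end DMAux

theorem dyck_eq_colored_motzkin (k a : ℕ) (hk : 2 ≤ k) (ha : a ≤ k - 1)
    (n m : ℕ) (hm : m ≤ n) :
    D k a n m =
      M (k - 1) (fun i => k.choose (i + 1) - (k - a - 1).choose (i + 1))
        (fun i => k.choose (i + 1)) n m :=
  DMAux.main_eq k a hk ha n m
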